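/- Let r ≥ 1 be an integer. Let h : ℝ → ℝ be continuous, of class C^r on (0,∞), and such that for each ν = 0,1,…,r the function y ↦ y^{ν−1/2}·h^{(ν)}(y) remains bounded as y ↓ 0 (i.e. is bounded on (0,ε] for some ε > 0). Let U ⊆ ℝⁿ be open and let ψ : U → [0,∞) be a nonnegative C² function. Then the composition h ∘ ψ : U → ℝ is locally Lipschitz continuous. -/

import Mathlib

open Filter Topology Set

/-- 1D Taylor upper bound from a one-sided Lipschitz bound on the derivative. -/
lemma lemTaylor {w w' : ℝ → ℝ} {T M : ℝ} (hT : 0 ≤ T) (hM : 0 ≤ M)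
    (hw : ∀ t ∈ Set.Icc (0:ℝ) T, HasDerivAt w (w' t) t)
    (hlip : ∀ t ∈ Set.Icc (0:ℝ) T, w' t ≤ w' 0 + M * t) :
    ∀ t ∈ Set.Icc (0:ℝ) T, w t ≤ w 0 + w' 0 * t + M / 2 * t ^ 2 := by
  intro t ht
  set q : ℝ → ℝ := fun s => w 0 + w' 0 * s + M / 2 * s ^ 2 - w s with hq
  have hqd : ∀ s ∈ Set.Icc (0:ℝ) T, HasDerivAt q (w' 0 + M * s - w' s) s := by
    intro s hs
    have h1 : HasDerivAt (fun s : ℝ => w 0 + w' 0 * s + M / 2 * s ^ 2)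
        (w' 0 + M * s) s := by
      have := ((hasDerivAt_id s).const_mul (w' 0)).const_add (w 0)
      have h2 := ((hasDerivAt_pow 2 s).const_mul (M / 2))
      exact (this.add h2).congr_deriv (by simp; ring)
    exact h1.sub (hw s hs)
  have hmono : MonotoneOn q (Set.Icc (0:ℝ) T) := by
    apply monotoneOn_of_deriv_nonneg (convex_Icc _ _)
    · exact fun s hs => ((hqd s hs).continuousAt).continuousWithinAt
    · intro s hs
      rw [interior_Icc] at hs
      exact ((hqd s (Ioo_subset_Icc_self hs)).differentiableAt).differentiableWithinAt
    · intro s hs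
      rw [interior_Icc] at hs
      rw [(hqd s (Ioo_subset_Icc_self hs)).deriv]
      have := hlip s (Ioo_subset_Icc_self hs)
      linarith
  have h0 : q 0 ≤ q t := hmono (Set.left_mem_Icc.mpr hT) ht ht.1
  simp only [hq] at h0
  nlinarith [h0]

/-- Algebra: from `G ≤ p/t + M t/2` for all `t ∈ (0, ρ/2]`, deduce `G² ≤ K p`. -/
lemma lemBalg {G p M ε ρ : ℝ} (hG : 0 ≤ G) (hp : 0 ≤ p) (hpε : p < ε) (hM : 0 ≤ M)
    (hρ : 0 < ρ) (H : ∀ t : ℝ, 0 < t → t ≤ ρ / 2 → G ≤ p / t + M * t / 2) :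
    G ^ 2 ≤ (2 * M + 32 * ε / ρ ^ 2) * p := by
  have hε : 0 < ε := lt_of_le_of_lt hp hpε
  rcases eq_or_lt_of_le hG with hG0 | hGpos
  · rw [← hG0]
    have h1 : 0 ≤ 32 * ε / ρ ^ 2 := div_nonneg (by linarith) (by positivity)
    nlinarith
  · set A : ℝ := M + 16 * ε / ρ ^ 2 with hA
    have hApos : 0 < A := by rw [hA]; positivity
    have hMA : M ≤ A := by
      have h1 : 0 ≤ 16 * ε / ρ ^ 2 := div_nonneg (by linarith) (by positivity)
      rw [hA]; linarith
    clear_value A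
    have hG1 : G * ρ ≤ 2 * p + M * ρ ^ 2 / 4 := by
      have h1 := H (ρ / 2) (by positivity) le_rfl
      have h2 := mul_le_mul_of_nonneg_right h1 (le_of_lt (by positivity : (0:ℝ) < ρ / 2))
      have e1 : (p / (ρ / 2) + M * (ρ / 2) / 2) * (ρ / 2) = p + M * ρ ^ 2 / 8 := by
        field_simp; ring
      rw [e1] at h2
      nlinarith
    set t₀ : ℝ := G / A with ht₀def
    have ht₀pos : 0 < t₀ := by rw [ht₀def]; positivity
    have ht₀G : t₀ * A = G := div_mul_cancel₀ G (ne_of_gt hApos)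
    clear_value t₀
    have ht0le : t₀ ≤ ρ / 2 := by
      rw [ht₀def, div_le_iff₀ hApos]
      rw [hA]
      have hρ2 : 0 < ρ ^ 2 := by positivity
      have : 16 * ε / ρ ^ 2 * ρ ^ 2 = 16 * ε := by field_simp
      nlinarith
    have hH := H t₀ ht₀pos ht0le
    have hk : G * t₀ ≤ p + M * t₀ / 2 * t₀ := by
      have h2 := mul_le_mul_of_nonneg_right hH ht₀pos.le
      rwa [add_mul, div_mul_cancel₀ _ (ne_of_gt ht₀pos)] at h2
    have e1 : G * t₀ = t₀ ^ 2 * A := by rw [← ht₀G]; ring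
    have e2 : M * t₀ / 2 * t₀ = M * t₀ ^ 2 / 2 := by ring
    have h6 : t₀ ^ 2 * (2 * A - M) ≤ 2 * p := by
      rw [e1, e2] at hk; nlinarith [hk]
    have h7 : t₀ ^ 2 * A ≤ t₀ ^ 2 * (2 * A - M) :=
      mul_le_mul_of_nonneg_left (by linarith) (sq_nonneg t₀)
    have h8 : t₀ ^ 2 * A ≤ 2 * p := h7.trans h6
    have e3 : G ^ 2 = t₀ ^ 2 * A * A := by rw [← ht₀G]; ring
    have goal2 : G ^ 2 ≤ 2 * A * p := by
      rw [e3]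
      calc t₀ ^ 2 * A * A ≤ 2 * p * A := mul_le_mul_of_nonneg_right h8 hApos.le
        _ = 2 * A * p := by ring
    calc G ^ 2 ≤ 2 * A * p := goal2
      _ = (2 * M + 32 * ε / ρ ^ 2) * p := by rw [hA]; ring

/-- If `u ≥ 0` on `[0,1]` with `|u'| ≤ c √u`, then `|√u(1) - √u(0)| ≤ c/2`. -/
lemma lemA {u u' : ℝ → ℝ} {c : ℝ} (hc : 0 ≤ c)
    (hu : ∀ t ∈ Set.Icc (0:ℝ) 1, HasDerivAt u (u' t) t)
    (hnn : ∀ t ∈ Set.Icc (0:ℝ) 1, 0 ≤ u t)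
    (hb : ∀ t ∈ Set.Icc (0:ℝ) 1, |u' t| ≤ c * Real.sqrt (u t)) :
    |Real.sqrt (u 1) - Real.sqrt (u 0)| ≤ c / 2 := by
  have key : ∀ δ : ℝ, 0 < δ →
      |Real.sqrt (u 1 + δ) - Real.sqrt (u 0 + δ)| ≤ c / 2 := by
    intro δ hδ
    set v : ℝ → ℝ := fun t => Real.sqrt (u t + δ) with hv
    have hder : ∀ t ∈ Set.Icc (0:ℝ) 1,
        HasDerivAt v (u' t / (2 * Real.sqrt (u t + δ))) t := by
      intro t ht
      have hut := hnn t ht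
      have h1 : HasDerivAt (fun s => u s + δ) (u' t) t := (hu t ht).add_const δ
      have h2 := h1.sqrt (by positivity)
      simpa using h2
    have hbound : ∀ t ∈ Set.Icc (0:ℝ) 1,
        ‖u' t / (2 * Real.sqrt (u t + δ))‖ ≤ c / 2 := by
      intro t ht
      have hut := hnn t ht
      have h0 : 0 < Real.sqrt (u t + δ) := Real.sqrt_pos.mpr (by positivity)
      rw [Real.norm_eq_abs, abs_div, abs_of_pos (by positivity : (0:ℝ) < 2 * Real.sqrt (u t + δ))]
      rw [div_le_div_iff₀ (by positivity) (by norm_num)]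
      have h3 : Real.sqrt (u t) ≤ Real.sqrt (u t + δ) :=
        Real.sqrt_le_sqrt (by linarith)
      have h4 : c * Real.sqrt (u t) ≤ c * Real.sqrt (u t + δ) :=
        mul_le_mul_of_nonneg_left h3 hc
      have h5 := hb t ht
      nlinarith
    have := (convex_Icc (0:ℝ) 1).norm_image_sub_le_of_norm_hasDerivWithin_le
      (f := v) (f' := fun t => u' t / (2 * Real.sqrt (u t + δ)))
      (fun t ht => (hder t ht).hasDerivWithinAt) hbound
      (Set.left_mem_Icc.mpr one_pos.le) (Set.right_mem_Icc.mpr one_pos.le)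
    simpa [Real.norm_eq_abs] using this
  have h1 : Tendsto (fun δ : ℝ => |Real.sqrt (u 1 + δ) - Real.sqrt (u 0 + δ)|)
      (𝓝[>] (0:ℝ)) (𝓝 |Real.sqrt (u 1) - Real.sqrt (u 0)|) := by
    have : Continuous fun δ : ℝ => |Real.sqrt (u 1 + δ) - Real.sqrt (u 0 + δ)| := by
      continuity
    simpa using (this.tendsto 0).mono_left nhdsWithin_le_nhds
  exact le_of_tendsto h1 (eventually_nhdsWithin_of_forall fun δ hδ => key δ hδ)

set_option maxHeartbeats 2000000 in
/-- Let `h : ℝ → ℝ` be continuous, of class `C^r` on `(0,∞)`, and such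
that for every `ν = 0,1,…,r` the function `y ↦ y^(ν - 1/2) * h^(ν)(y)` remains bounded as
`y ↓ 0`.  If `ψ : U → [0,∞)` is a nonnegative `C²` function on an open set `U ⊆ ℝⁿ`, then
`h ∘ ψ` is locally Lipschitz continuous. -/
theorem stmt16 {n : ℕ} (r : ℕ) (hr : 1 ≤ r) (h : ℝ → ℝ) (hcont : Continuous h)
    (hCr : ContDiffOn ℝ r h (Set.Ioi (0:ℝ)))
    (hbd : ∀ ν : ℕ, ν ≤ r → ∃ ε > (0:ℝ), ∃ C : ℝ, ∀ y ∈ Set.Ioc (0:ℝ) ε,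
      |y ^ ((ν : ℝ) - 1/2) * iteratedDeriv ν h y| ≤ C)
    {U : Set (EuclideanSpace ℝ (Fin n))} (hU : IsOpen U)
    (ψ : EuclideanSpace ℝ (Fin n) → ℝ) (hψ0 : ∀ x ∈ U, 0 ≤ ψ x)
    (hψC2 : ContDiffOn ℝ 2 ψ U) :
    ∀ x ∈ U, ∃ V ∈ 𝓝 x, ∃ L > (0:ℝ), ∀ y ∈ V ∩ U, ∀ z ∈ V ∩ U,
      |h (ψ z) - h (ψ y)| ≤ L * ‖z - y‖ := by
  intro x hx
  have hr' : (1 : WithTop ℕ∞) ≤ (r : WithTop ℕ∞) := by exact_mod_cast hr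
  have hψdiff : ∀ y ∈ U, HasFDerivAt ψ (fderiv ℝ ψ y) y := fun y hy =>
    ((hψC2.differentiableOn (by norm_num)).differentiableAt (hU.mem_nhds hy)).hasFDerivAt
  rcases eq_or_lt_of_le (hψ0 x hx) with hx0 | hxpos
  · -- hard case : ψ x = 0
    obtain ⟨ε, hε, C, hC⟩ := hbd 1 hr
    have hC0 : 0 ≤ C := le_trans (abs_nonneg _) (hC ε ⟨hε, le_refl ε⟩)
    have hC' : ∀ y ∈ Set.Ioc (0:ℝ) ε, |Real.sqrt y * deriv h y| ≤ C := by
      intro y hy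
      have h1 := hC y hy
      have e : ((1:ℕ) : ℝ) - 1/2 = (1/2 : ℝ) := by norm_num
      rw [e, iteratedDeriv_one, ← Real.sqrt_eq_rpow] at h1
      exact h1
    -- Lipschitz bound for the derivative of ψ near x
    have hfd : ContDiffAt ℝ 1 (fderiv ℝ ψ) x :=
      ((hψC2.fderiv_of_isOpen hU (by norm_num)).contDiffAt (hU.mem_nhds hx))
    obtain ⟨M₀, t₁, ht₁, hlipf⟩ := hfd.exists_lipschitzOnWith
    set M : ℝ := (M₀ : ℝ) with hMdef
    have hM0 : 0 ≤ M := M₀.coe_nonneg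
    -- ψ < ε near x
    have hψcont : ContinuousAt ψ x := (hψC2.continuousOn.continuousAt (hU.mem_nhds hx))
    have hsmall : {y | ψ y < ε} ∈ 𝓝 x := by
      have : Set.Iio ε ∈ 𝓝 (ψ x) := Iio_mem_nhds (by rw [← hx0]; exact hε)
      exact hψcont.preimage_mem_nhds this
    have hUn : U ∩ t₁ ∩ {y | ψ y < ε} ∈ 𝓝 x :=
      Filter.inter_mem (Filter.inter_mem (hU.mem_nhds hx) ht₁) hsmall
    obtain ⟨ρ', hρ'pos, hballsub⟩ := Metric.mem_nhds_iff.mp hUn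
    set ρ : ℝ := ρ' / 2 with hρdef
    have hρ : 0 < ρ := by positivity
    have hcb : Metric.closedBall x ρ ⊆ U ∩ t₁ ∩ {y | ψ y < ε} :=
      (Metric.closedBall_subset_ball (by rw [hρdef]; linarith)).trans hballsub
    have hinU : ∀ y ∈ Metric.closedBall x ρ, y ∈ U := fun y hy => (hcb hy).1.1
    have hint₁ : ∀ y ∈ Metric.closedBall x ρ, y ∈ t₁ := fun y hy => (hcb hy).1.2
    have hinε : ∀ y ∈ Metric.closedBall x ρ, ψ y < ε := fun y hy => (hcb hy).2
    have hb2cb : Metric.ball x (ρ / 2) ⊆ Metric.closedBall x ρ :=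
      (Metric.ball_subset_ball (by linarith)).trans Metric.ball_subset_closedBall
    have hMlip : ∀ a ∈ Metric.closedBall x ρ, ∀ b ∈ Metric.closedBall x ρ,
        ‖fderiv ℝ ψ a - fderiv ℝ ψ b‖ ≤ M * ‖a - b‖ := by
      intro a ha b hb
      have := hlipf.dist_le_mul a (hint₁ a ha) b (hint₁ b hb)
      rwa [dist_eq_norm, dist_eq_norm] at this
    -- gradient bound (Lemma B)
    set K : ℝ := 2 * M + 32 * ε / ρ ^ 2 with hKdef
    have hK0 : 0 ≤ K := by
      rw [hKdef]
      have : 0 ≤ 32 * ε / ρ ^ 2 := div_nonneg (by linarith) (by positivity)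
      linarith
    have key : ∀ y ∈ Metric.ball x (ρ / 2), ‖fderiv ℝ ψ y‖ ^ 2 ≤ K * ψ y := by
      intro y hy
      have hyU : y ∈ U := hinU y (hb2cb hy)
      have hyρ : ‖y - x‖ < ρ / 2 := by
        rw [← dist_eq_norm]; exact Metric.mem_ball.mp hy
      rw [hKdef]
      apply lemBalg (norm_nonneg _) (hψ0 y hyU) (hinε y (hb2cb hy)) hM0 hρ
      intro t ht htle
      have hcnn : (0:ℝ) ≤ ψ y / t + M * t / 2 := by
        have := hψ0 y hyU; positivity
      -- the key directional estimate
      have claim : ∀ e : EuclideanSpace ℝ (Fin n), ‖e‖ = 1 →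
          0 ≤ ψ y + (fderiv ℝ ψ y) e * t + M / 2 * t ^ 2 := by
        intro e he
        have hseg : ∀ s ∈ Set.Icc (0:ℝ) (ρ / 2), y + s • e ∈ Metric.closedBall x ρ := by
          intro s hs
          rw [Metric.mem_closedBall, dist_eq_norm]
          have heq : y + s • e - x = (y - x) + s • e := by abel
          rw [heq]
          calc ‖(y - x) + s • e‖ ≤ ‖y - x‖ + ‖s • e‖ := norm_add_le _ _
            _ = ‖y - x‖ + |s| * ‖e‖ := by rw [norm_smul, Real.norm_eq_abs]
            _ ≤ ρ / 2 + ρ / 2 := by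
                rw [he, mul_one, abs_of_nonneg hs.1]
                have := hs.2; linarith
            _ = ρ := by ring
        have hw : ∀ s ∈ Set.Icc (0:ℝ) (ρ / 2),
            HasDerivAt (fun s : ℝ => ψ (y + s • e))
              ((fun s : ℝ => (fderiv ℝ ψ (y + s • e)) e) s) s := by
          intro s hs
          have hline : HasDerivAt (fun s : ℝ => y + s • e) e s := by
            have h1 : HasDerivAt (fun s : ℝ => s • e) ((1:ℝ) • e) s :=
              (hasDerivAt_id s).smul_const e
            rw [one_smul] at h1
            exact h1.const_add y
          exact (hψdiff _ (hinU _ (hseg s hs))).comp_hasDerivAt s hline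
        have hlip1 : ∀ s ∈ Set.Icc (0:ℝ) (ρ / 2),
            (fun s : ℝ => (fderiv ℝ ψ (y + s • e)) e) s
              ≤ (fun s : ℝ => (fderiv ℝ ψ (y + s • e)) e) (0:ℝ) + M * s := by
          intro s hs
          beta_reduce
          have h0mem : y + (0:ℝ) • e ∈ Metric.closedBall x ρ :=
            hseg 0 ⟨le_refl 0, by linarith⟩
          have hdiff := hMlip _ (hseg s hs) _ h0mem
          have h1 : ‖(fderiv ℝ ψ (y + s • e) - fderiv ℝ ψ (y + (0:ℝ) • e)) e‖
              ≤ ‖fderiv ℝ ψ (y + s • e) - fderiv ℝ ψ (y + (0:ℝ) • e)‖ * ‖e‖ :=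
            ContinuousLinearMap.le_opNorm _ _
          rw [he, mul_one] at h1
          have h2 : y + s • e - (y + (0:ℝ) • e) = s • e := by
            rw [zero_smul, add_zero]; abel
          rw [h2] at hdiff
          have h3 : ‖s • e‖ = s := by
            rw [norm_smul, he, mul_one, Real.norm_eq_abs, abs_of_nonneg hs.1]
          rw [h3] at hdiff
          have h4 := h1.trans hdiff
          rw [ContinuousLinearMap.sub_apply] at h4
          rw [Real.norm_eq_abs] at h4
          have h5 := (le_abs_self _).trans h4
          linarith [h5]
        have htay := lemTaylor (by linarith : (0:ℝ) ≤ ρ / 2) hM0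
          (fun s hs => hw s hs) (fun s hs => hlip1 s hs) t ⟨ht.le, htle⟩
        have hwt0 : 0 ≤ ψ (y + t • e) := hψ0 _ (hinU _ (hseg t ⟨ht.le, htle⟩))
        simp only [zero_smul, add_zero] at htay
        nlinarith [htay, hwt0]
      -- conclude operator norm bound
      apply ContinuousLinearMap.opNorm_le_bound _ hcnn
      intro v
      rcases eq_or_ne v 0 with rfl | hv
      · simp
      · have hvn : (0:ℝ) < ‖v‖ := norm_pos_iff.mpr hv
        set e := ‖v‖⁻¹ • v with hedef
        have he : ‖e‖ = 1 := by
          rw [hedef, norm_smul, norm_inv, norm_norm, inv_mul_cancel₀ (ne_of_gt hvn)]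
        have hene : ‖-e‖ = 1 := by rw [norm_neg, he]
        have hcl1 := claim e he
        have hcl2 := claim (-e) hene
        rw [map_neg] at hcl2
        have hbound : |(fderiv ℝ ψ y) e| ≤ ψ y / t + M * t / 2 := by
          rw [abs_le]
          constructor
          · have h6 : -(ψ y) - M / 2 * t ^ 2 ≤ (fderiv ℝ ψ y) e * t := by linarith
            have h7 : (-(ψ y) - M / 2 * t ^ 2) / t ≤ (fderiv ℝ ψ y) e := by
              rw [div_le_iff₀ ht]; exact h6
            have h8 : (-(ψ y) - M / 2 * t ^ 2) / t = -(ψ y / t + M * t / 2) := by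
              field_simp; ring
            linarith [h8 ▸ h7]
          · have h6 : (fderiv ℝ ψ y) e * t ≤ ψ y + M / 2 * t ^ 2 := by linarith
            have h7 : (fderiv ℝ ψ y) e ≤ (ψ y + M / 2 * t ^ 2) / t := by
              rw [le_div_iff₀ ht]; exact h6
            have h8 : (ψ y + M / 2 * t ^ 2) / t = ψ y / t + M * t / 2 := by
              field_simp
            linarith [h8 ▸ h7]
        have hv' : v = ‖v‖ • e := by
          rw [hedef, smul_smul, mul_inv_cancel₀ (ne_of_gt hvn), one_smul]
        calc ‖(fderiv ℝ ψ y) v‖ = ‖v‖ * |(fderiv ℝ ψ y) e| := by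
              conv_lhs => rw [hv']
              rw [map_smul, smul_eq_mul, Real.norm_eq_abs, abs_mul, abs_of_pos hvn]
          _ ≤ ‖v‖ * (ψ y / t + M * t / 2) :=
              mul_le_mul_of_nonneg_left hbound hvn.le
          _ = (ψ y / t + M * t / 2) * ‖v‖ := by ring
    -- Step: sqrt of ψ is Lipschitz on the small ball
    have hsqK : 0 ≤ Real.sqrt K := Real.sqrt_nonneg K
    have hsqlip : ∀ y ∈ Metric.ball x (ρ / 2), ∀ z ∈ Metric.ball x (ρ / 2),
        |Real.sqrt (ψ z) - Real.sqrt (ψ y)| ≤ Real.sqrt K * ‖z - y‖ / 2 := by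
      intro y hy z hz
      have hmemseg : ∀ s ∈ Set.Icc (0:ℝ) 1, y + s • (z - y) ∈ Metric.ball x (ρ / 2) := by
        intro s hs
        have heq : y + s • (z - y) = (1 - s) • y + s • z := by
          rw [smul_sub]; module
        rw [heq]
        exact (convex_ball x (ρ / 2)) hy hz (by linarith [hs.2]) hs.1 (by ring)
      have hu : ∀ s ∈ Set.Icc (0:ℝ) 1,
          HasDerivAt (fun s : ℝ => ψ (y + s • (z - y)))
            ((fun s : ℝ => (fderiv ℝ ψ (y + s • (z - y))) (z - y)) s) s := by
        intro s hs
        have hline : HasDerivAt (fun s : ℝ => y + s • (z - y)) (z - y) s := by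
          have h1 : HasDerivAt (fun s : ℝ => s • (z - y)) ((1:ℝ) • (z - y)) s :=
            (hasDerivAt_id s).smul_const (z - y)
          rw [one_smul] at h1
          exact h1.const_add y
        exact (hψdiff _ (hinU _ (hb2cb (hmemseg s hs)))).comp_hasDerivAt s hline
      have hnn : ∀ s ∈ Set.Icc (0:ℝ) 1, 0 ≤ (fun s : ℝ => ψ (y + s • (z - y))) s :=
        fun s hs => hψ0 _ (hinU _ (hb2cb (hmemseg s hs)))
      have hbnd : ∀ s ∈ Set.Icc (0:ℝ) 1,
          |(fun s : ℝ => (fderiv ℝ ψ (y + s • (z - y))) (z - y)) s|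
            ≤ (Real.sqrt K * ‖z - y‖) * Real.sqrt ((fun s : ℝ => ψ (y + s • (z - y))) s) := by
        intro s hs
        beta_reduce
        have hmem := hmemseg s hs
        have hψs := hψ0 _ (hinU _ (hb2cb hmem))
        have h1 : ‖(fderiv ℝ ψ (y + s • (z - y))) (z - y)‖
            ≤ ‖fderiv ℝ ψ (y + s • (z - y))‖ * ‖z - y‖ :=
          ContinuousLinearMap.le_opNorm _ _
        have h2 : ‖fderiv ℝ ψ (y + s • (z - y))‖
            ≤ Real.sqrt (K * ψ (y + s • (z - y))) := by
          rw [Real.le_sqrt (norm_nonneg _) (by positivity)]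
          exact key _ hmem
        have h3 : Real.sqrt (K * ψ (y + s • (z - y)))
            = Real.sqrt K * Real.sqrt (ψ (y + s • (z - y))) := Real.sqrt_mul hK0 _
        rw [← Real.norm_eq_abs]
        calc ‖(fderiv ℝ ψ (y + s • (z - y))) (z - y)‖
            ≤ ‖fderiv ℝ ψ (y + s • (z - y))‖ * ‖z - y‖ := h1
          _ ≤ Real.sqrt K * Real.sqrt (ψ (y + s • (z - y))) * ‖z - y‖ := by
              rw [← h3]; exact mul_le_mul_of_nonneg_right h2 (norm_nonneg _)
          _ = Real.sqrt K * ‖z - y‖ * Real.sqrt (ψ (y + s • (z - y))) := by ring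
      have hres := lemA (by positivity : (0:ℝ) ≤ Real.sqrt K * ‖z - y‖)
        (fun s hs => hu s hs) hnn hbnd
      simp only [one_smul, zero_smul, add_zero] at hres
      have he1 : y + (z - y) = z := by abel
      rw [he1] at hres
      calc |Real.sqrt (ψ z) - Real.sqrt (ψ y)| ≤ Real.sqrt K * ‖z - y‖ / 2 := hres
        _ = Real.sqrt K * ‖z - y‖ / 2 := rfl
    -- Step: g = fun s => h (s^2) is Lipschitz on (0, √ε]
    set g : ℝ → ℝ := fun s => h (s ^ 2) with hgdef
    have hsqε : 0 < Real.sqrt ε := Real.sqrt_pos.mpr hε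
    have hgd : ∀ τ : ℝ, 0 < τ →
        HasDerivAt g (deriv h (τ ^ 2) * (2 * τ)) τ := by
      intro τ hτ
      have hhd : DifferentiableAt ℝ h (τ ^ 2) :=
        (hCr.differentiableOn (by exact_mod_cast (by omega : r ≠ 0))).differentiableAt (Ioi_mem_nhds (by positivity))
      have hsq : HasDerivAt (fun x : ℝ => x ^ 2) (2 * τ) τ := by
        simpa using hasDerivAt_pow 2 τ
      have hcomp := HasDerivAt.comp (h := fun x : ℝ => x ^ 2) (x := τ) (hhd.hasDerivAt) hsq
      exact hcomp
    have hgb : ∀ τ : ℝ, 0 < τ → τ ≤ Real.sqrt ε →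
        ‖deriv h (τ ^ 2) * (2 * τ)‖ ≤ 2 * C := by
      intro τ hτ hτε
      have hτ2 : τ ^ 2 ∈ Set.Ioc (0:ℝ) ε := by
        constructor
        · positivity
        · calc τ ^ 2 ≤ Real.sqrt ε ^ 2 := by nlinarith
            _ = ε := Real.sq_sqrt hε.le
      have h1 := hC' (τ ^ 2) hτ2
      have h2 : Real.sqrt (τ ^ 2) = τ := Real.sqrt_sq hτ.le
      rw [h2] at h1
      rw [Real.norm_eq_abs]
      have : |deriv h (τ ^ 2) * (2 * τ)| = 2 * |τ * deriv h (τ ^ 2)| := by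
        rw [abs_mul, abs_mul, abs_mul]
        rw [abs_of_nonneg hτ.le, abs_of_nonneg (by norm_num : (0:ℝ) ≤ 2)]
        ring
      rw [this]
      linarith
    have hglip : ∀ a ∈ Set.Ioc (0:ℝ) (Real.sqrt ε), ∀ b ∈ Set.Ioc (0:ℝ) (Real.sqrt ε),
        |g b - g a| ≤ 2 * C * |b - a| := by
      intro a ha b hb
      set m := min a b with hmdef
      have hm0 : 0 < m := lt_min ha.1 hb.1
      have hsub : Set.Icc m (Real.sqrt ε) ⊆ Set.Ioi (0:ℝ) := fun τ hτ =>
        lt_of_lt_of_le hm0 hτ.1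
      have := (convex_Icc m (Real.sqrt ε)).norm_image_sub_le_of_norm_hasDerivWithin_le
        (f := g) (f' := fun τ => deriv h (τ ^ 2) * (2 * τ))
        (fun τ hτ => (hgd τ (hsub hτ)).hasDerivWithinAt)
        (fun τ hτ => hgb τ (hsub hτ) hτ.2)
        ⟨min_le_left a b, ha.2⟩ ⟨min_le_right a b, hb.2⟩
      rw [Real.norm_eq_abs, Real.norm_eq_abs] at this
      exact this
    have hgc : Continuous g := hcont.comp (continuous_pow 2)
    have hglip0 : ∀ a ∈ Set.Icc (0:ℝ) (Real.sqrt ε), ∀ b ∈ Set.Icc (0:ℝ) (Real.sqrt ε),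
        |g b - g a| ≤ 2 * C * |b - a| := by
      have half : ∀ b ∈ Set.Ioc (0:ℝ) (Real.sqrt ε), |g b - g 0| ≤ 2 * C * |b - 0| := by
        intro b hb
        have hT1 : Tendsto (fun a : ℝ => |g b - g a|) (𝓝[>] (0:ℝ)) (𝓝 |g b - g 0|) := by
          have : Continuous fun a : ℝ => |g b - g a| := by continuity
          exact (this.tendsto 0).mono_left nhdsWithin_le_nhds
        have hT2 : Tendsto (fun a : ℝ => 2 * C * |b - a|) (𝓝[>] (0:ℝ)) (𝓝 (2 * C * |b - 0|)) := by
          have : Continuous fun a : ℝ => 2 * C * |b - a| := by continuity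
          exact (this.tendsto 0).mono_left nhdsWithin_le_nhds
        refine le_of_tendsto_of_tendsto hT1 hT2 ?_
        filter_upwards [Ioo_mem_nhdsGT_of_mem
          (Set.left_mem_Ico.mpr hsqε : (0:ℝ) ∈ Set.Ico 0 (Real.sqrt ε))] with a haa
        exact hglip a ⟨haa.1, haa.2.le⟩ b hb
      intro a ha b hb
      rcases eq_or_lt_of_le ha.1 with ha0 | hapos
      · rcases eq_or_lt_of_le hb.1 with hb0 | hbpos
        · rw [← ha0, ← hb0]; simp
        · rw [← ha0]; exact half b ⟨hbpos, hb.2⟩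
      · rcases eq_or_lt_of_le hb.1 with hb0 | hbpos
        · rw [← hb0, abs_sub_comm (g 0), abs_sub_comm (0:ℝ)]
          exact half a ⟨hapos, ha.2⟩
        · exact hglip a ⟨hapos, ha.2⟩ b ⟨hbpos, hb.2⟩
    -- Final assembly
    refine ⟨Metric.ball x (ρ / 2), Metric.ball_mem_nhds x (by positivity),
      C * Real.sqrt K + 1, by positivity, ?_⟩
    intro y hy z hz
    have hyU : y ∈ U := hy.2
    have hzU : z ∈ U := hz.2
    have hyb : y ∈ Metric.ball x (ρ / 2) := hy.1
    have hzb : z ∈ Metric.ball x (ρ / 2) := hz.1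
    have hψy : 0 ≤ ψ y := hψ0 y hyU
    have hψz : 0 ≤ ψ z := hψ0 z hzU
    have hψyε : ψ y < ε := hinε y (hb2cb hyb)
    have hψzε : ψ z < ε := hinε z (hb2cb hzb)
    have hqy : Real.sqrt (ψ y) ∈ Set.Icc (0:ℝ) (Real.sqrt ε) :=
      ⟨Real.sqrt_nonneg _, Real.sqrt_le_sqrt hψyε.le⟩
    have hqz : Real.sqrt (ψ z) ∈ Set.Icc (0:ℝ) (Real.sqrt ε) :=
      ⟨Real.sqrt_nonneg _, Real.sqrt_le_sqrt hψzε.le⟩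
    have hgy : g (Real.sqrt (ψ y)) = h (ψ y) := by
      rw [hgdef]; simp only []; rw [Real.sq_sqrt hψy]
    have hgz : g (Real.sqrt (ψ z)) = h (ψ z) := by
      rw [hgdef]; simp only []; rw [Real.sq_sqrt hψz]
    have h1 := hglip0 _ hqy _ hqz
    rw [hgy, hgz] at h1
    have h2 := hsqlip y hyb z hzb
    have h3 : 2 * C * |Real.sqrt (ψ z) - Real.sqrt (ψ y)|
        ≤ 2 * C * (Real.sqrt K * ‖z - y‖ / 2) :=
      mul_le_mul_of_nonneg_left h2 (by linarith)
    have h4 : 2 * C * (Real.sqrt K * ‖z - y‖ / 2) = C * Real.sqrt K * ‖z - y‖ := by ring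
    have h5 : C * Real.sqrt K * ‖z - y‖ ≤ (C * Real.sqrt K + 1) * ‖z - y‖ := by
      have := norm_nonneg (z - y)
      nlinarith
    linarith [h1, h3, h4 ▸ h3]
  · -- easy case : ψ x > 0
    have hhC1 : ContDiffAt ℝ 1 h (ψ x) :=
      (hCr.contDiffAt (Ioi_mem_nhds hxpos)).of_le hr'
    have hψC1 : ContDiffAt ℝ 1 ψ x := (hψC2.contDiffAt (hU.mem_nhds hx)).of_le (by norm_num)
    have hcomp : ContDiffAt ℝ 1 (h ∘ ψ) x := hhC1.comp x hψC1
    obtain ⟨K, t, ht, hlip⟩ := hcomp.exists_lipschitzOnWith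
    refine ⟨t, ht, (K : ℝ) + 1, by positivity, ?_⟩
    intro y hy z hz
    have h1 := hlip.dist_le_mul z hz.1 y hy.1
    have h2 : dist ((h ∘ ψ) z) ((h ∘ ψ) y) = |h (ψ z) - h (ψ y)| := by
      simp [Function.comp, Real.dist_eq]
    have h3 : dist z y = ‖z - y‖ := by rw [dist_eq_norm]
    rw [h2, h3] at h1
    have h4 : (K : ℝ) * ‖z - y‖ ≤ ((K : ℝ) + 1) * ‖z - y‖ := by
      have := norm_nonneg (z - y); nlinarith
    linarith
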